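/- Fix a real number r. For a nonzero quaternion a let q(a) = cos(r·log‖a‖) + sin(r·log‖a‖)·i ∈ ℍ, and define a ∘ x = a · q(a)⁻¹ · x · q(a) for a ≠ 0, and 0 ∘ x = 0. Then every nonzero quaternion has a two-sided inverse for ∘: for every a ≠ 0 there exists b ≠ 0 with a ∘ b = 1 and b ∘ a = 1. Together with associativity and the identity 1, the nonzero quaternions form a group under ∘. -/

import Mathlib

open Quaternion
open scoped Classical

/-- The unit quaternion `‖a‖^{ir} = cos(r·log‖a‖) + sin(r·log‖a‖)·i`. -/
noncomputable def kalscheuerUnit (r : ℝ) (a : Quaternion ℝ) : Quaternion ℝ :=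
  ⟨Real.cos (r * Real.log ‖a‖), Real.sin (r * Real.log ‖a‖), 0, 0⟩

/-- The Kalscheuer nearfield multiplication `a ∘ x = a · q(a)⁻¹ · x · q(a)`
(for `a ≠ 0`, and `0 ∘ x = 0`), where `q(a) = ‖a‖^{ir}`. -/
noncomputable def kalscheuerMul (r : ℝ) (a x : Quaternion ℝ) : Quaternion ℝ :=
  if a = 0 then 0 else a * (kalscheuerUnit r a)⁻¹ * x * kalscheuerUnit r a

lemma kalscheuerUnit_norm (r : ℝ) (a : Quaternion ℝ) : ‖kalscheuerUnit r a‖ = 1 := by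
  have h : Quaternion.normSq (kalscheuerUnit r a) = 1 := by
    rw [Quaternion.normSq_def']
    simp [kalscheuerUnit]
  have := Quaternion.normSq_eq_norm_mul_self (kalscheuerUnit r a)
  nlinarith [norm_nonneg (kalscheuerUnit r a)]

lemma kalscheuerUnit_ne_zero (r : ℝ) (a : Quaternion ℝ) : kalscheuerUnit r a ≠ 0 := by
  intro h
  have := kalscheuerUnit_norm r a
  rw [h] at this
  simp at this

/-- In Kalscheuer's nearfield, every nonzero quaternion has a two-sided inverse
for the multiplication `∘`: together with associativity and the identity `1`,
the nonzero quaternions form a group under `∘`. -/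
theorem kalscheuerMul_exists_inverse (r : ℝ) (a : Quaternion ℝ) (ha : a ≠ 0) :
    ∃ b : Quaternion ℝ, b ≠ 0 ∧ kalscheuerMul r a b = 1 ∧ kalscheuerMul r b a = 1 := by
  set q : Quaternion ℝ := kalscheuerUnit r a with hq
  have hqne : q ≠ 0 := kalscheuerUnit_ne_zero r a
  set b : Quaternion ℝ := q * a⁻¹ * q⁻¹ with hb
  have hbne : b ≠ 0 := by
    apply mul_ne_zero (mul_ne_zero hqne (inv_ne_zero ha)) (inv_ne_zero hqne)
  have hnormb : ‖b‖ = ‖a‖⁻¹ := by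
    rw [hb, norm_mul, norm_mul, norm_inv, norm_inv, kalscheuerUnit_norm]
    simp
  -- kalscheuerUnit r b = q⁻¹
  have hub : kalscheuerUnit r b = q⁻¹ := by
    have hlog : Real.log ‖b‖ = -Real.log ‖a‖ := by
      rw [hnormb, Real.log_inv]
    have hstar : kalscheuerUnit r b = star q := by
      unfold kalscheuerUnit
      rw [hlog]
      ext <;> simp [hq, kalscheuerUnit, mul_neg, Real.cos_neg, Real.sin_neg,
        Quaternion.re_star (a := (⟨_, _, _, _⟩ : ℍ[ℝ])), Quaternion.imI_star (a := (⟨_, _, _, _⟩ : ℍ[ℝ])),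
        Quaternion.imJ_star (a := (⟨_, _, _, _⟩ : ℍ[ℝ])), Quaternion.imK_star (a := (⟨_, _, _, _⟩ : ℍ[ℝ]))]
    rw [hstar]
    refine eq_inv_of_mul_eq_one_left ?_
    rw [Quaternion.star_mul_self]
    have : Quaternion.normSq q = 1 := by
      have h1 := kalscheuerUnit_norm r a
      have := Quaternion.normSq_eq_norm_mul_self q
      rw [hq] at this ⊢
      rw [this, h1]; ring
    rw [this]; simp
  refine ⟨b, hbne, ?_, ?_⟩
  · rw [kalscheuerMul, if_neg ha]
    show a * q⁻¹ * (q * a⁻¹ * q⁻¹) * q = 1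
    simp [mul_assoc, inv_mul_cancel_left₀, mul_inv_cancel_left₀, hqne, ha,
      inv_mul_cancel₀, mul_inv_cancel₀]
  · rw [kalscheuerMul, if_neg hbne, hub, inv_inv]
    show q * a⁻¹ * q⁻¹ * q * a * q⁻¹ = 1
    simp [mul_assoc, inv_mul_cancel_left₀, mul_inv_cancel_left₀, hqne, ha,
      inv_mul_cancel₀, mul_inv_cancel₀]
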